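/- The average reward μ(u) = Σ_m φ_m Σ_{l} θ_{u_l m} ∏_{i<l}(1 − θ_{u_i m}) of a list u is invariant under permutations of the list: for any permutation σ of {1,…,L}, μ(u ∘ σ) = μ(u). -/
import Mathlib


open Finset

lemma telescope_range (f : ℕ → ℝ) (n : ℕ) :
    ∑ l ∈ range n, f l * ∏ i ∈ range l, (1 - f i) = 1 - ∏ i ∈ range n, (1 - f i) := by
  induction n with
  | zero => simp
  | succ n ih => rw [sum_range_succ, prod_range_succ, ih]; ring

lemma Iio_fin_prod {L : ℕ} (g : ℕ → ℝ) (l : Fin L) :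
    ∏ i ∈ Finset.Iio l, (1 - g i.val) = ∏ i ∈ range l.val, (1 - g i) := by
  apply Finset.prod_nbij (fun i => i.val)
  · intro a ha; simpa using Fin.lt_iff_val_lt_val.mp (Finset.mem_Iio.mp ha)
  · intro a _ b _ h; exact Fin.val_injective h
  · intro b hb
    simp only [Finset.coe_range, Set.mem_Iio] at hb
    exact ⟨⟨b, lt_trans hb l.isLt⟩, by simp [Fin.lt_iff_val_lt_val, hb], rfl⟩
  · intro a _; rfl

lemma telescope_fin {L : ℕ} (f : Fin L → ℝ) :
    ∑ l, f l * ∏ i ∈ Finset.Iio l, (1 - f i) = 1 - ∏ i, (1 - f i) := by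
  set g : ℕ → ℝ := fun i => if h : i < L then f ⟨i, h⟩ else 0 with hg
  have hfg : ∀ l : Fin L, f l = g l.val := by
    intro l; simp [hg, l.isLt]
  calc ∑ l, f l * ∏ i ∈ Finset.Iio l, (1 - f i)
      = ∑ l : Fin L, g l.val * ∏ i ∈ range l.val, (1 - g i) := by
        refine Finset.sum_congr rfl fun l _ => ?_
        rw [hfg l, ← Iio_fin_prod g l]
        congr 1
        exact Finset.prod_congr rfl fun i _ => by rw [hfg i]
    _ = ∑ l ∈ range L, g l * ∏ i ∈ range l, (1 - g i) :=
        Fin.sum_univ_eq_sum_range (fun l => g l * ∏ i ∈ range l, (1 - g i)) L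
    _ = 1 - ∏ i ∈ range L, (1 - g i) := telescope_range g L
    _ = 1 - ∏ i : Fin L, (1 - f i) := by
        rw [← Fin.prod_univ_eq_prod_range (fun i => 1 - g i) L]
        congr 1
        exact Finset.prod_congr rfl fun i _ => by rw [hfg i]

/-- the average reward of a list is invariant under permutations. -/
theorem cascade_reward_perm_invariant {M ι : Type*} [Fintype M] {L : ℕ}
    (φ : M → ℝ) (θ : ι → M → ℝ) (u : Fin L → ι) (σ : Equiv.Perm (Fin L)) :
    (∑ m, φ m * ∑ l, θ ((u ∘ σ) l) m * ∏ i ∈ Finset.Iio l, (1 - θ ((u ∘ σ) i) m))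
      = ∑ m, φ m * ∑ l, θ (u l) m * ∏ i ∈ Finset.Iio l, (1 - θ (u i) m) := by
  refine Finset.sum_congr rfl fun m _ => ?_
  rw [telescope_fin (fun l => θ ((u ∘ σ) l) m), telescope_fin (fun l => θ (u l) m)]
  congr 1
  exact congrArg (1 - ·) (Equiv.prod_comp σ (fun i => 1 - θ (u i) m))
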